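/- For an integer a \ge 4, T(a-2,1,1) = (1/2) T(1,1,a-2) + \zeta(a). -/

import Mathlib

open Finset Filter

/-! Auxiliary lemmas for the Tornheim series identity. -/

private lemma pnat_one_le (n : ℕ+) : (1:ℝ) ≤ ((n:ℕ):ℝ) := by exact_mod_cast n.one_le

private lemma pnat_pos' (n : ℕ+) : (0:ℝ) < ((n:ℕ):ℝ) := lt_of_lt_of_le one_pos (pnat_one_le n)

private lemma tsum_pnat' {α : Type*} [AddCommMonoid α] [TopologicalSpace α] (f : ℕ+ → α) :
    ∑' n : ℕ+, f n = ∑' n : ℕ, f (Nat.succPNat n) :=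
  (Equiv.pnatEquivNat.symm.tsum_eq f).symm

private lemma summable_pnat_iff (f : ℕ+ → ℝ) :
    Summable f ↔ Summable (fun n : ℕ => f (Nat.succPNat n)) :=
  (Equiv.pnatEquivNat.symm.summable_iff (f := f)).symm

private lemma psum (k : ℕ) (hk : 2 ≤ k) : Summable (fun n : ℕ+ => 1 / ((n:ℕ):ℝ)^k) := by
  rw [summable_pnat_iff]
  have := (Real.summable_one_div_nat_pow (p := k)).2 (by omega)
  exact ((summable_nat_add_iff 1).2 this).congr (fun n => by simp [Nat.succPNat])

private lemma summable_pnat_of_le (C : ℝ) (k : ℕ) (hk : 2 ≤ k) (f : ℕ+ → ℝ)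
    (h0 : ∀ n, 0 ≤ f n) (hle : ∀ n, f n ≤ C / ((n:ℕ):ℝ)^k) : Summable f := by
  apply Summable.of_nonneg_of_le h0 hle
  have := (psum k hk).mul_left C
  exact this.congr (fun n => by rw [mul_one_div])

private lemma telsum (c : ℝ) (hc : 1 ≤ c) :
    HasSum (fun j : ℕ => 1/(c + j) - 1/(c + j + 1)) (1/c) := by
  have hpos : ∀ j : ℕ, (0:ℝ) < c + j := fun j => by positivity
  have hnn : ∀ j : ℕ, (0:ℝ) ≤ 1/(c + j) - 1/(c + j + 1) := by
    intro j
    have h1 : (0:ℝ) < c + j := hpos j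
    have : (1:ℝ)/(c + j + 1) ≤ 1/(c + j) := by
      apply one_div_le_one_div_of_le h1; linarith
    linarith
  rw [hasSum_iff_tendsto_nat_of_nonneg hnn]
  have hps : ∀ k : ℕ, ∑ i ∈ range k, (1/(c + i) - 1/(c + i + 1)) = 1/c - 1/(c + k) := by
    intro k
    have h := Finset.sum_range_sub' (f := fun i : ℕ => 1/(c + i)) k
    simp only [Nat.cast_add, Nat.cast_one, Nat.cast_zero, add_zero] at h
    rw [← h]
    apply Finset.sum_congr rfl; intro i _; ring_nf
  simp only [hps]
  have h2 : Tendsto (fun k : ℕ => 1/(c + k)) atTop (nhds 0) := by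
    have h3 : Tendsto (fun k : ℕ => c + (k:ℝ)) atTop atTop :=
      tendsto_atTop_add_const_left _ c tendsto_natCast_atTop_atTop
    have := tendsto_inv_atTop_zero.comp h3
    simpa [Function.comp_def, one_div] using this
  have := (tendsto_const_nhds (x := 1/c)).sub h2
  simpa using this

private lemma harm_summable (n : ℕ) :
    Summable (fun m : ℕ+ => 1/((m:ℕ):ℝ) - 1/(((m:ℕ):ℝ) + n)) := by
  apply summable_pnat_of_le n 2 le_rfl
  · intro m
    have hm := pnat_one_le m
    have h1 : (0:ℝ) < (m:ℕ) := pnat_pos' m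
    have h2 : (0:ℝ) < ((m:ℕ):ℝ) + n := by positivity
    have : (1:ℝ)/(((m:ℕ):ℝ) + n) ≤ 1/((m:ℕ):ℝ) := by
      apply one_div_le_one_div_of_le h1; simp [Nat.cast_nonneg]
    linarith
  · intro m
    have hm := pnat_one_le m
    have h1 : (0:ℝ) < (m:ℕ) := pnat_pos' m
    have h2 : (0:ℝ) < ((m:ℕ):ℝ) + n := by positivity
    rw [div_sub_div _ _ h1.ne' h2.ne']
    have hnum : 1 * (((m:ℕ):ℝ) + n) - ((m:ℕ):ℝ) * 1 = n := by ring
    rw [hnum]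
    apply div_le_div_of_nonneg_left (Nat.cast_nonneg n) (by positivity)
    nlinarith

private lemma harm_tsum (n : ℕ) :
    ∑' m : ℕ+, (1/((m:ℕ):ℝ) - 1/(((m:ℕ):ℝ) + n)) = ∑ k ∈ range n, 1/((k:ℝ)+1) := by
  induction n with
  | zero => simp
  | succ n ih =>
    have h1 : (1:ℝ) ≤ (n:ℝ) + 1 := by
      have := Nat.cast_nonneg (α := ℝ) n; linarith
    have h := telsum ((n:ℝ)+1) h1
    have h2 : HasSum (fun m : ℕ+ => 1/(((m:ℕ):ℝ) + n) - 1/(((m:ℕ):ℝ) + n + 1))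
        (1/((n:ℝ)+1)) := by
      apply (Equiv.pnatEquivNat.symm.hasSum_iff).mp
      convert h using 1
      funext j
      have : ((Nat.succPNat j : ℕ+) : ℕ) = j + 1 := rfl
      simp only [Function.comp, Equiv.pnatEquivNat_symm_apply, this]
      push_cast
      ring_nf
    have hpt : ∀ m : ℕ+, 1/((m:ℕ):ℝ) - 1/(((m:ℕ):ℝ) + (n+1 : ℕ))
        = (1/((m:ℕ):ℝ) - 1/(((m:ℕ):ℝ) + n)) + (1/(((m:ℕ):ℝ) + n) - 1/(((m:ℕ):ℝ) + n + 1)) := by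
      intro m
      push_cast
      ring
    rw [tsum_congr hpt, Summable.tsum_add (harm_summable n) h2.summable, ih, h2.tsum_eq,
      Finset.sum_range_succ]

private lemma rowA (p : ℕ) (n : ℕ+) :
    ∑' m : ℕ+, 1 / (((n:ℕ):ℝ)^p * ((m:ℕ):ℝ) * (((n:ℕ):ℝ) + ((m:ℕ):ℝ)))
      = (∑ k ∈ range (n:ℕ), 1/((k:ℝ)+1)) * (1 / ((n:ℕ):ℝ)^(p+1)) := by
  have hpt : ∀ m : ℕ+, 1 / (((n:ℕ):ℝ)^p * ((m:ℕ):ℝ) * (((n:ℕ):ℝ) + ((m:ℕ):ℝ)))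
      = (1 / ((n:ℕ):ℝ)^(p+1)) * (1/((m:ℕ):ℝ) - 1/(((m:ℕ):ℝ) + (n:ℕ))) := by
    intro m
    have hn := pnat_pos' n
    have hm := pnat_pos' m
    have hnm : (0:ℝ) < ((n:ℕ):ℝ) + ((m:ℕ):ℝ) := by positivity
    have hnp : (0:ℝ) < ((n:ℕ):ℝ)^p := by positivity
    rw [eq_comm, div_sub_div _ _ hm.ne' (by linarith : (((m:ℕ):ℝ) + (n:ℕ)) ≠ 0)]
    rw [div_mul_div_comm]
    rw [div_eq_div_iff (by positivity) (by positivity)]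
    ring
  rw [tsum_congr hpt, tsum_mul_left, harm_tsum, mul_comm]

private lemma cube_aux (x y : ℝ) (hx : 1 ≤ x) (hy : 1 ≤ y) : x * y^2 ≤ (x+y)^3 := by
  have h1 : x ≤ x + y := by linarith
  have h2 : y^2 ≤ (x+y)^2 := by nlinarith
  calc x*y^2 ≤ (x+y)*(x+y)^2 := mul_le_mul h1 h2 (by positivity) (by linarith)
  _ = (x+y)^3 := by ring

private noncomputable def cf (p : ℕ) (n m : ℕ+) : ℝ :=
  1 / (((n:ℕ):ℝ) * (((n:ℕ):ℝ) + ((m:ℕ):ℝ))^(p+1))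

private lemma cf_nonneg (p : ℕ) (n m : ℕ+) : 0 ≤ cf p n m := by unfold cf; positivity

private lemma cf_summable (p : ℕ) (hp : 2 ≤ p) (n : ℕ+) : Summable (fun m => cf p n m) := by
  apply summable_pnat_of_le 1 2 le_rfl _ (cf_nonneg p n)
  intro m
  unfold cf
  have hx := pnat_one_le n; have hy := pnat_one_le m
  apply one_div_le_one_div_of_le (by positivity)
  have h1 : (((n:ℕ):ℝ) + ((m:ℕ):ℝ))^2 ≤ (((n:ℕ):ℝ) + ((m:ℕ):ℝ))^(p+1) :=
    pow_le_pow_right₀ (by linarith) (by omega)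
  nlinarith [sq_nonneg (((n:ℕ):ℝ) + ((m:ℕ):ℝ))]

private lemma df_summable (p : ℕ) (n : ℕ+) :
    Summable (fun m : ℕ+ => 1 / (((m:ℕ):ℝ) * (((n:ℕ):ℝ) + ((m:ℕ):ℝ))^(p+1))) := by
  apply summable_pnat_of_le 1 2 le_rfl
  · intro m; positivity
  · intro m
    have hx := pnat_one_le n; have hy := pnat_one_le m
    apply one_div_le_one_div_of_le (by positivity)
    have h1 : (((n:ℕ):ℝ) + ((m:ℕ):ℝ)) ≤ (((n:ℕ):ℝ) + ((m:ℕ):ℝ))^(p+1) :=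
      le_self_pow₀ (by linarith) (by omega)
    nlinarith

private lemma cf_col_summable (p : ℕ) (m : ℕ+) : Summable (fun n => cf p n m) := by
  apply summable_pnat_of_le 1 2 le_rfl _ (fun n => cf_nonneg p n m)
  intro n
  unfold cf
  have hx := pnat_one_le n; have hy := pnat_one_le m
  apply one_div_le_one_div_of_le (by positivity)
  have h1 : (((n:ℕ):ℝ) + ((m:ℕ):ℝ)) ≤ (((n:ℕ):ℝ) + ((m:ℕ):ℝ))^(p+1) :=
    le_self_pow₀ (by linarith) (by omega)
  nlinarith

private lemma cf_rowsum_summable (p : ℕ) (hp : 2 ≤ p) :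
    Summable (fun n : ℕ+ => ∑' m : ℕ+, cf p n m) := by
  set Z2 : ℝ := ∑' m : ℕ+, 1/((m:ℕ):ℝ)^2 with hZ2
  apply summable_pnat_of_le Z2 2 le_rfl
  · intro n; exact tsum_nonneg (fun m => cf_nonneg p n m)
  · intro n
    have hle : ∀ m : ℕ+, cf p n m ≤ (1/((n:ℕ):ℝ)^2) * (1/((m:ℕ):ℝ)^2) := by
      intro m
      unfold cf
      rw [div_mul_div_comm, one_mul]
      have hx := pnat_one_le n; have hy := pnat_one_le m
      apply one_div_le_one_div_of_le (by positivity)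
      have h3 : (((n:ℕ):ℝ) + ((m:ℕ):ℝ))^3 ≤ (((n:ℕ):ℝ) + ((m:ℕ):ℝ))^(p+1) :=
        pow_le_pow_right₀ (by linarith) (by omega)
      have hcube : ((n:ℕ):ℝ) * ((m:ℕ):ℝ)^2 ≤ (((n:ℕ):ℝ) + ((m:ℕ):ℝ))^3 := cube_aux _ _ hx hy
      have h4 := mul_le_mul_of_nonneg_left h3 (le_of_lt (pnat_pos' n))
      nlinarith
    calc ∑' m : ℕ+, cf p n m ≤ ∑' m : ℕ+, (1/((n:ℕ):ℝ)^2) * (1/((m:ℕ):ℝ)^2) :=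
          Summable.tsum_le_tsum hle (cf_summable p hp n) ((psum 2 le_rfl).mul_left _)
      _ = (1/((n:ℕ):ℝ)^2) * Z2 := tsum_mul_left
      _ = Z2 / ((n:ℕ):ℝ)^2 := by rw [one_div_mul_eq_div]

private lemma df_rowsum_summable (p : ℕ) (hp : 2 ≤ p) :
    Summable (fun n : ℕ+ => ∑' m : ℕ+, 1 / (((m:ℕ):ℝ) * (((n:ℕ):ℝ) + ((m:ℕ):ℝ))^(p+1))) := by
  set Z2 : ℝ := ∑' m : ℕ+, 1/((m:ℕ):ℝ)^2 with hZ2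
  apply summable_pnat_of_le Z2 2 le_rfl
  · intro n; exact tsum_nonneg (fun m => by positivity)
  · intro n
    have hle : ∀ m : ℕ+, 1 / (((m:ℕ):ℝ) * (((n:ℕ):ℝ) + ((m:ℕ):ℝ))^(p+1))
        ≤ (1/((n:ℕ):ℝ)^2) * (1/((m:ℕ):ℝ)^2) := by
      intro m
      rw [div_mul_div_comm, one_mul]
      have hx := pnat_one_le n; have hy := pnat_one_le m
      apply one_div_le_one_div_of_le (by positivity)
      have h3 : (((n:ℕ):ℝ) + ((m:ℕ):ℝ))^3 ≤ (((n:ℕ):ℝ) + ((m:ℕ):ℝ))^(p+1) :=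
        pow_le_pow_right₀ (by linarith) (by omega)
      have hcube : ((n:ℕ):ℝ)^2 * ((m:ℕ):ℝ) ≤ (((n:ℕ):ℝ) + ((m:ℕ):ℝ))^3 := by
        have := cube_aux _ _ hy hx
        calc ((n:ℕ):ℝ)^2 * ((m:ℕ):ℝ) = ((m:ℕ):ℝ) * ((n:ℕ):ℝ)^2 := by ring
        _ ≤ (((m:ℕ):ℝ) + ((n:ℕ):ℝ))^3 := this
        _ = (((n:ℕ):ℝ) + ((m:ℕ):ℝ))^3 := by ring
      have h4 := mul_le_mul_of_nonneg_left h3 (le_of_lt (pnat_pos' m))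
      nlinarith
    calc ∑' m : ℕ+, 1 / (((m:ℕ):ℝ) * (((n:ℕ):ℝ) + ((m:ℕ):ℝ))^(p+1))
        ≤ ∑' m : ℕ+, (1/((n:ℕ):ℝ)^2) * (1/((m:ℕ):ℝ)^2) :=
          Summable.tsum_le_tsum hle (df_summable p n) ((psum 2 le_rfl).mul_left _)
      _ = (1/((n:ℕ):ℝ)^2) * Z2 := tsum_mul_left
      _ = Z2 / ((n:ℕ):ℝ)^2 := by rw [one_div_mul_eq_div]

private lemma DeqC (p : ℕ) (hp : 2 ≤ p) :
    ∑' n : ℕ+, ∑' m : ℕ+, 1 / (((m:ℕ):ℝ) * (((n:ℕ):ℝ) + ((m:ℕ):ℝ))^(p+1))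
      = ∑' n : ℕ+, ∑' m : ℕ+, cf p n m := by
  have h1 : ∀ n m : ℕ+, 1 / (((m:ℕ):ℝ) * (((n:ℕ):ℝ) + ((m:ℕ):ℝ))^(p+1)) = cf p m n := by
    intro n m; unfold cf; rw [add_comm ((m:ℕ):ℝ) ((n:ℕ):ℝ)]
  have h2 : ∑' n : ℕ+, ∑' m : ℕ+, 1 / (((m:ℕ):ℝ) * (((n:ℕ):ℝ) + ((m:ℕ):ℝ))^(p+1))
      = ∑' n : ℕ+, ∑' m : ℕ+, cf p m n :=
    tsum_congr (fun n => tsum_congr (fun m => h1 n m))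
  rw [h2]
  have hunc : Summable (Function.uncurry (cf p)) := by
    have he : Function.uncurry (cf p) = fun q : ℕ+ × ℕ+ => cf p q.1 q.2 := rfl
    rw [he, summable_prod_of_nonneg (fun q => cf_nonneg p q.1 q.2)]
    exact ⟨fun n => cf_summable p hp n, cf_rowsum_summable p hp⟩
  exact Summable.tsum_comm' hunc (fun n => cf_summable p hp n) (fun m => cf_col_summable p m)

private lemma Bsplit (p : ℕ) (hp : 2 ≤ p) :
    ∑' n : ℕ+, ∑' m : ℕ+, 1 / (((n:ℕ):ℝ) * ((m:ℕ):ℝ) * (((n:ℕ):ℝ) + ((m:ℕ):ℝ))^p)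
      = 2 * ∑' n : ℕ+, ∑' m : ℕ+, cf p n m := by
  have hpt : ∀ n m : ℕ+, 1 / (((n:ℕ):ℝ) * ((m:ℕ):ℝ) * (((n:ℕ):ℝ) + ((m:ℕ):ℝ))^p)
      = cf p n m + 1 / (((m:ℕ):ℝ) * (((n:ℕ):ℝ) + ((m:ℕ):ℝ))^(p+1)) := by
    intro n m
    unfold cf
    have hx := pnat_pos' n; have hy := pnat_pos' m
    have hxy : (0:ℝ) < ((n:ℕ):ℝ) + ((m:ℕ):ℝ) := by linarith
    rw [div_add_div _ _ (by positivity) (by positivity),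
      div_eq_div_iff (by positivity) (by positivity)]
    ring
  have hrow : ∀ n : ℕ+, ∑' m : ℕ+, 1 / (((n:ℕ):ℝ) * ((m:ℕ):ℝ) * (((n:ℕ):ℝ) + ((m:ℕ):ℝ))^p)
      = (∑' m : ℕ+, cf p n m)
        + ∑' m : ℕ+, 1 / (((m:ℕ):ℝ) * (((n:ℕ):ℝ) + ((m:ℕ):ℝ))^(p+1)) := by
    intro n
    rw [tsum_congr (hpt n)]
    exact Summable.tsum_add (cf_summable p hp n) (df_summable p n)
  rw [tsum_congr hrow, Summable.tsum_add (cf_rowsum_summable p hp) (df_rowsum_summable p hp), DeqC p hp]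
  ring

private noncomputable def G (p : ℕ) (n m : ℕ+) : ℝ :=
  if (m:ℕ) ≤ (n:ℕ) then 1 / (((m:ℕ):ℝ) * ((n:ℕ):ℝ)^(p+1)) else 0

private lemma G_nonneg (p : ℕ) (n m : ℕ+) : 0 ≤ G p n m := by
  unfold G; split <;> positivity

private lemma G_row (p : ℕ) (n : ℕ+) :
    ∑' m : ℕ+, G p n m = (∑ k ∈ range (n:ℕ), 1/((k:ℝ)+1)) * (1 / ((n:ℕ):ℝ)^(p+1)) := by
  rw [tsum_pnat']
  have hz : ∀ j : ℕ, j ∉ range (n:ℕ) → G p n (Nat.succPNat j) = 0 := by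
    intro j hj
    rw [Finset.mem_range, not_lt] at hj
    have : ¬ ((Nat.succPNat j : ℕ+) : ℕ) ≤ (n:ℕ) := by
      simp only [Nat.succPNat_coe]; omega
    unfold G; rw [if_neg this]
  rw [tsum_eq_sum hz, Finset.sum_mul]
  apply Finset.sum_congr rfl
  intro j hj
  rw [Finset.mem_range] at hj
  have : ((Nat.succPNat j : ℕ+) : ℕ) ≤ (n:ℕ) := by simp only [Nat.succPNat_coe]; omega
  unfold G
  rw [if_pos this]
  simp only [Nat.succPNat_coe]
  push_cast
  rw [div_mul_div_comm, one_mul]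

private lemma G_row_summable (p : ℕ) (n : ℕ+) : Summable (fun m => G p n m) := by
  apply summable_pnat_of_le 1 2 le_rfl _ (G_nonneg p n)
  intro m
  unfold G
  split
  case isTrue h =>
    simp only [one_div]
    apply inv_anti₀ (by positivity)
    have h1 : ((m:ℕ):ℝ) ≤ ((n:ℕ):ℝ) := by exact_mod_cast h
    calc ((m:ℕ):ℝ)^2 = ((m:ℕ):ℝ) * ((m:ℕ):ℝ) := sq _
    _ ≤ ((m:ℕ):ℝ) * ((n:ℕ):ℝ)^(p+1) := by
        apply mul_le_mul_of_nonneg_left _ (le_of_lt (pnat_pos' m))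
        calc ((m:ℕ):ℝ) ≤ ((n:ℕ):ℝ) := h1
        _ ≤ ((n:ℕ):ℝ)^(p+1) := le_self_pow₀ (pnat_one_le n) (by omega)
  case isFalse h => positivity

private lemma G_col_summable (p : ℕ) (hp : 2 ≤ p) (m : ℕ+) : Summable (fun n => G p n m) := by
  apply summable_pnat_of_le 1 2 le_rfl _ (fun n => G_nonneg p n m)
  intro n
  unfold G
  split
  case isTrue h =>
    simp only [one_div]
    apply inv_anti₀ (by positivity)
    calc ((n:ℕ):ℝ)^2 = 1 * ((n:ℕ):ℝ)^2 := (one_mul _).symm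
    _ ≤ ((m:ℕ):ℝ) * ((n:ℕ):ℝ)^(p+1) := by
        apply mul_le_mul (pnat_one_le m) _ (by positivity) (le_of_lt (pnat_pos' m))
        apply pow_le_pow_right₀ (pnat_one_le n) (by omega)
  case isFalse h => positivity

private lemma harm_le (n : ℕ+) : (∑ k ∈ range (n:ℕ), 1/((k:ℝ)+1)) ≤ ((n:ℕ):ℝ) := by
  calc (∑ k ∈ range (n:ℕ), 1/((k:ℝ)+1)) ≤ ∑ _k ∈ range (n:ℕ), (1:ℝ) := by
        apply Finset.sum_le_sum
        intro k _
        rw [div_le_one (by positivity)]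
        have : (0:ℝ) ≤ (k:ℝ) := Nat.cast_nonneg k
        linarith
  _ = ((n:ℕ):ℝ) := by simp

private lemma G_rowsum_summable (p : ℕ) (hp : 2 ≤ p) :
    Summable (fun n : ℕ+ => ∑' m : ℕ+, G p n m) := by
  apply summable_pnat_of_le 1 p hp
  · intro n; exact tsum_nonneg (fun m => G_nonneg p n m)
  · intro n
    rw [G_row]
    have hn := pnat_pos' n
    have key : ((n:ℕ):ℝ) * (1/((n:ℕ):ℝ)^(p+1)) = 1/((n:ℕ):ℝ)^p := by
      rw [pow_succ]
      field_simp
    calc (∑ k ∈ range (n:ℕ), 1/((k:ℝ)+1)) * (1/((n:ℕ):ℝ)^(p+1))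
        ≤ ((n:ℕ):ℝ) * (1/((n:ℕ):ℝ)^(p+1)) :=
          mul_le_mul_of_nonneg_right (harm_le n) (by positivity)
      _ = 1/((n:ℕ):ℝ)^p := key

private lemma G_fubini (p : ℕ) (hp : 2 ≤ p) :
    ∑' n : ℕ+, ∑' m : ℕ+, G p n m = ∑' m : ℕ+, ∑' n : ℕ+, G p n m := by
  have hunc : Summable (Function.uncurry (G p)) := by
    have he : Function.uncurry (G p) = fun q : ℕ+ × ℕ+ => G p q.1 q.2 := rfl
    rw [he, summable_prod_of_nonneg (fun q => G_nonneg p q.1 q.2)]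
    exact ⟨fun n => G_row_summable p n, G_rowsum_summable p hp⟩
  exact (Summable.tsum_comm' hunc (fun n => G_row_summable p n) (fun m => G_col_summable p hp m)).symm

private lemma G_col (p : ℕ) (hp : 2 ≤ p) (m : ℕ+) :
    ∑' n : ℕ+, G p n m = 1/((m:ℕ):ℝ)^(p+2) + ∑' j : ℕ+, cf p m j := by
  rw [tsum_pnat' (fun n => G p n m)]
  have hsum : Summable (fun i : ℕ => G p (Nat.succPNat i) m) :=
    (summable_pnat_iff (fun n => G p n m)).1 (G_col_summable p hp m)
  have hkey := Summable.sum_add_tsum_nat_add (f := fun i => G p (Nat.succPNat i) m) ((m:ℕ)-1) hsum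
  rw [← hkey]
  have hm1 : 1 ≤ (m:ℕ) := m.one_le
  have hz : ∑ i ∈ range ((m:ℕ)-1), G p (Nat.succPNat i) m = 0 := by
    apply Finset.sum_eq_zero
    intro i hi
    rw [Finset.mem_range] at hi
    have : ¬ ((m:ℕ) ≤ ((Nat.succPNat i : ℕ+):ℕ)) := by
      simp only [Nat.succPNat_coe]; omega
    unfold G; rw [if_neg this]
  rw [hz, zero_add]
  have hshift : ∀ i : ℕ, G p (Nat.succPNat (i + ((m:ℕ)-1))) m
      = 1/(((m:ℕ):ℝ) * (((i:ℝ) + ((m:ℕ):ℝ)))^(p+1)) := by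
    intro i
    have hc : ((Nat.succPNat (i + ((m:ℕ)-1)) : ℕ+):ℕ) = i + (m:ℕ) := by
      simp only [Nat.succPNat_coe]; omega
    have hcond : (m:ℕ) ≤ ((Nat.succPNat (i + ((m:ℕ)-1)) : ℕ+):ℕ) := by omega
    unfold G
    rw [if_pos hcond, hc]
    push_cast
    ring_nf
  rw [tsum_congr hshift]
  have hsum2 : Summable (fun i : ℕ => 1/(((m:ℕ):ℝ) * (((i:ℝ) + ((m:ℕ):ℝ)))^(p+1))) :=
    ((summable_nat_add_iff ((m:ℕ)-1)).2 hsum).congr hshift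
  rw [Summable.tsum_eq_zero_add hsum2]
  congr 1
  · rw [Nat.cast_zero, zero_add, ← pow_succ']
  · simp only [cf]
    rw [tsum_pnat' (fun j : ℕ+ => 1 / (((m:ℕ):ℝ) * (((m:ℕ):ℝ) + ((j:ℕ):ℝ))^(p+1)))]
    apply tsum_congr
    intro i
    simp only [Nat.succPNat_coe]
    push_cast
    ring_nf


/-- The Tornheim double series with natural number exponents. -/
noncomputable def tornheimN (a b c : ℕ) : ℝ :=
  ∑' n : ℕ+, ∑' m : ℕ+,
    1 / (((n : ℕ) : ℝ) ^ a * ((m : ℕ) : ℝ) ^ b * (((n : ℕ) + (m : ℕ) : ℕ) : ℝ) ^ c)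

private lemma main_real (p : ℕ) (hp : 2 ≤ p) :
    tornheimN p 1 1 = (1/2) * tornheimN 1 1 p + ∑' m : ℕ+, 1/((m:ℕ):ℝ)^(p+2) := by
  have hA : tornheimN p 1 1 = ∑' n : ℕ+, ∑' m : ℕ+, G p n m := by
    unfold tornheimN
    apply tsum_congr; intro n
    have hc : ∀ m : ℕ+, 1 / (((n:ℕ):ℝ)^p * ((m:ℕ):ℝ)^1 * ((((n:ℕ) + (m:ℕ) : ℕ)):ℝ)^1)
        = 1 / (((n:ℕ):ℝ)^p * ((m:ℕ):ℝ) * (((n:ℕ):ℝ) + ((m:ℕ):ℝ))) := by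
      intro m; rw [pow_one, pow_one]; push_cast; ring_nf
    rw [tsum_congr hc, rowA p n, G_row p n]
  have hB : tornheimN 1 1 p = 2 * ∑' n : ℕ+, ∑' m : ℕ+, cf p n m := by
    rw [← Bsplit p hp]
    unfold tornheimN
    apply tsum_congr; intro n; apply tsum_congr; intro m
    rw [pow_one, pow_one]; push_cast; ring_nf
  rw [hA, G_fubini p hp, tsum_congr (fun m => G_col p hp m),
    Summable.tsum_add (psum (p+2) (by omega)) (cf_rowsum_summable p hp), hB]
  ring

private lemma zeta_cast (a : ℕ) (ha : 2 ≤ a) :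
    ((∑' m : ℕ+, 1/((m:ℕ):ℝ)^a : ℝ) : ℂ) = riemannZeta a := by
  have hre : 1 < (a : ℂ).re := by
    rw [Complex.natCast_re]; exact_mod_cast (by omega : 1 < a)
  rw [zeta_eq_tsum_one_div_nat_add_one_cpow hre, Complex.ofReal_tsum,
    tsum_pnat' (fun m : ℕ+ => ((1/((m:ℕ):ℝ)^a : ℝ) : ℂ))]
  apply tsum_congr
  intro n
  rw [Complex.cpow_natCast]
  simp only [Nat.succPNat_coe]
  push_cast
  ring

theorem tornheim_a21 (a : ℕ) (ha : 4 ≤ a) :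
    ((tornheimN (a - 2) 1 1 : ℝ) : ℂ)
      = (1 / 2) * ((tornheimN 1 1 (a - 2) : ℝ) : ℂ) + riemannZeta a := by
  have hp : 2 ≤ a - 2 := by omega
  have hreal := main_real (a-2) hp
  have hpa : (a - 2) + 2 = a := by omega
  rw [hpa] at hreal
  rw [hreal, Complex.ofReal_add, Complex.ofReal_mul, zeta_cast a (by omega)]
  norm_num
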